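/- For 1 ≤ j < ⌊n/2⌋, the element of type D_n(a_j), with characteristic polynomial (t^{n-1-j} + 1)(t^{j+1} + 1), satisfies 12·nnVar(Sp) = n - 1/(n-1-j) - 1/(j+1), and this strictly exceeds n·(α_n - α_1) = n(n-2-j)/(n-1-j); i.e. the strict variance inequality nnVar > n(α_n - α_1)/12 holds. -/
import Mathlib

lemma sum1 (m : ℕ) : ∑ i ∈ Finset.Icc 1 m, (i : ℝ) = m * (m + 1) / 2 := by
  induction m with
  | zero => simp
  | succ k ih =>
    rw [Finset.sum_Icc_succ_top (by omega), ih]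
    push_cast; ring

lemma sum2 (m : ℕ) : ∑ i ∈ Finset.Icc 1 m, (i : ℝ) ^ 2 = m * (m + 1) * (2 * m + 1) / 6 := by
  induction m with
  | zero => simp
  | succ k ih =>
    rw [Finset.sum_Icc_succ_top (by omega), ih]
    push_cast; ring

lemma Vval (m : ℕ) (hm : 1 ≤ m) :
    12 * (∑ i ∈ Finset.Icc 1 m, ((2 * (i : ℝ) - 1) / (2 * (m : ℝ)) - 1 / 2) ^ 2)
      = (m : ℝ) - 1 / m := by
  have hm0 : (m : ℝ) ≠ 0 := by positivity
  have hrw : ∀ i ∈ Finset.Icc 1 m,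
      ((2 * (i : ℝ) - 1) / (2 * (m : ℝ)) - 1 / 2) ^ 2
        = (4 * (i : ℝ) ^ 2 - 4 * ((m : ℝ) + 1) * i + ((m : ℝ) + 1) ^ 2) / (4 * (m : ℝ) ^ 2) := by
    intro i _
    field_simp
    ring
  rw [Finset.sum_congr rfl hrw, ← Finset.sum_div]
  have hsplit : ∑ i ∈ Finset.Icc 1 m,
      (4 * (i : ℝ) ^ 2 - 4 * ((m : ℝ) + 1) * i + ((m : ℝ) + 1) ^ 2)
      = 4 * (∑ i ∈ Finset.Icc 1 m, (i : ℝ) ^ 2)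
        - 4 * ((m : ℝ) + 1) * (∑ i ∈ Finset.Icc 1 m, (i : ℝ))
        + m * ((m : ℝ) + 1) ^ 2 := by
    rw [Finset.sum_add_distrib, Finset.sum_sub_distrib, ← Finset.mul_sum, ← Finset.mul_sum,
      Finset.sum_const, Nat.card_Icc]
    simp [hm]
  rw [hsplit, sum1, sum2]
  field_simp
  ring

theorem stmt18 (n j : ℕ) (hj1 : 1 ≤ j) (hj2 : j < n / 2) :
    let V : ℕ → ℝ := fun m =>
      ∑ i ∈ Finset.Icc 1 m, ((2 * (i : ℝ) - 1) / (2 * (m : ℝ)) - 1 / 2) ^ 2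
    12 * (V (n - 1 - j) + V (j + 1))
        = (n : ℝ) - 1 / ((n : ℝ) - 1 - (j : ℝ)) - 1 / ((j : ℝ) + 1) ∧
    12 * (V (n - 1 - j) + V (j + 1))
        > (n : ℝ) * (((n : ℝ) - 2 - (j : ℝ)) / ((n : ℝ) - 1 - (j : ℝ))) := by
  intro V
  have hn : j + 2 ≤ n := by omega
  have hm1 : 1 ≤ n - 1 - j := by omega
  have hcast : ((n - 1 - j : ℕ) : ℝ) = (n : ℝ) - 1 - (j : ℝ) := by
    push_cast [Nat.cast_sub (by omega : 1 + j ≤ n), show n - 1 - j = n - (1 + j) from by omega]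
    ring
  have hVm : 12 * V (n - 1 - j) = ((n : ℝ) - 1 - j) - 1 / ((n : ℝ) - 1 - j) := by
    simp only [V]
    rw [← hcast]
    exact Vval _ hm1
  have hVk : 12 * V (j + 1) = ((j : ℝ) + 1) - 1 / ((j : ℝ) + 1) := by
    simp only [V]
    exact_mod_cast Vval (j + 1) (by omega)
  have heq : 12 * (V (n - 1 - j) + V (j + 1))
      = (n : ℝ) - 1 / ((n : ℝ) - 1 - (j : ℝ)) - 1 / ((j : ℝ) + 1) := by
    have hnj : (n : ℝ) ≥ (j : ℝ) + 2 := by exact_mod_cast hn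
    rw [mul_add, hVm, hVk]
    ring
  refine ⟨heq, ?_⟩
  rw [heq]
  have hm0 : (0 : ℝ) < (n : ℝ) - 1 - j := by
    have : (n : ℝ) ≥ (j : ℝ) + 2 := by exact_mod_cast hn
    linarith
  have hk0 : (0 : ℝ) < (j : ℝ) + 1 := by positivity
  have hj1' : (1 : ℝ) ≤ (j : ℝ) := by exact_mod_cast hj1
  have hn0 : (0 : ℝ) < (n : ℝ) := by
    have : (n : ℝ) ≥ (j : ℝ) + 2 := by exact_mod_cast hn
    linarith
  have hdiff : (n : ℝ) - 1 / ((n : ℝ) - 1 - (j : ℝ)) - 1 / ((j : ℝ) + 1)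
      - (n : ℝ) * (((n : ℝ) - 2 - (j : ℝ)) / ((n : ℝ) - 1 - (j : ℝ)))
      = ((n : ℝ) * (j : ℝ)) / ((((n : ℝ) - 1 - (j : ℝ))) * ((j : ℝ) + 1)) := by
    field_simp
    ring
  have hpos : (0 : ℝ) < ((n : ℝ) * (j : ℝ)) / ((((n : ℝ) - 1 - (j : ℝ))) * ((j : ℝ) + 1)) := by
    apply div_pos (by nlinarith) (by positivity)
  linarith [hdiff, hpos]
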